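/- For every positive integer n, every nonzero m in (-1,1), and every measurable set K ⊆ [-1,1]^n with positive volume whose barycenter equals m·(1,...,1), one has vol(K)^{1/n} < 2 sqrt(1 - m^2). -/

import Mathlib

open MeasureTheory Set
set_option maxHeartbeats 1000000
set_option maxHeartbeats 1000000

lemma scalar_core {μ : ℝ} (h0 : 0 < μ) (h1 : μ < 1) :
    ∃ l : ℝ, 0 < l ∧
      Real.exp (-(l*μ)) * ((Real.exp l - Real.exp (-l)) / l) < 2 * Real.sqrt (1 - μ^2) := by
  rcases le_or_gt μ (2/5) with hc | hc
  · have h2μ : (0:ℝ) < 2*μ := by linarith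
    refine ⟨2*μ, h2μ, ?_⟩
    have hb1 := Real.exp_bound (x := 2*μ) (by rw [abs_of_pos h2μ]; linarith) (n := 4) (by norm_num)
    have hb2 := Real.exp_bound (x := -(2*μ)) (by rw [abs_neg, abs_of_pos h2μ]; linarith) (n := 4) (by norm_num)
    rw [abs_le] at hb1 hb2
    simp only [Finset.sum_range_succ, Finset.sum_range_zero, abs_neg, abs_of_pos h2μ,
      Nat.factorial] at hb1 hb2
    norm_num at hb1 hb2
    have key : Real.exp (2*μ) - Real.exp (-(2*μ)) ≤ 4*μ + (8/3)*μ^3 + (5/3)*μ^4 := by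
      nlinarith [hb1.1, hb1.2, hb2.1, hb2.2]
    have hμ2 : μ^2 ≤ 4/25 := by nlinarith
    have hμ4 : μ^4 ≤ (4/25)*μ^2 := by nlinarith [sq_nonneg μ, sq_nonneg (μ^2)]
    have hsq : (1 - μ^2/2 - μ^4) ≤ Real.sqrt (1 - μ^2) := by
      rw [Real.le_sqrt (by nlinarith) (by nlinarith)]
      nlinarith [hμ2, hμ4, sq_nonneg (μ^2), sq_nonneg (μ^3)]
    have hexp : 1 + 2*μ^2 ≤ Real.exp (2*μ^2) := by
      have := Real.add_one_le_exp (2*μ^2); linarith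
    have main : Real.exp (2*μ) - Real.exp (-(2*μ)) <
        2 * Real.sqrt (1 - μ^2) * Real.exp (2*μ^2) * (2*μ) := by
      calc Real.exp (2*μ) - Real.exp (-(2*μ)) ≤ 4*μ + (8/3)*μ^3 + (5/3)*μ^4 := key
        _ < 2 * (1 - μ^2/2 - μ^4) * (1 + 2*μ^2) * (2*μ) := by
            nlinarith [hμ2, hμ4, mul_pos h0 h0, mul_pos (mul_pos h0 h0) h0,
              mul_le_mul_of_nonneg_left hμ2 (le_of_lt (mul_pos h0 h0)),
              mul_le_mul_of_nonneg_left hμ4 (le_of_lt (mul_pos h0 h0)),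
              mul_le_mul_of_nonneg_left hμ4 (mul_pos (mul_pos h0 h0) h0).le]
        _ ≤ 2 * Real.sqrt (1 - μ^2) * Real.exp (2*μ^2) * (2*μ) := by
            have h2 : (0:ℝ) ≤ 1 + 2*μ^2 := by positivity
            have h3 : (0:ℝ) ≤ 1 - μ^2/2 - μ^4 := by nlinarith
            have := mul_le_mul hsq hexp h2 (Real.sqrt_nonneg _)
            nlinarith [Real.sqrt_nonneg (1 - μ^2)]
    have hinv : Real.exp (-(2*μ*μ)) * Real.exp (2*μ^2) = 1 := by
      rw [← Real.exp_add]; ring_nf; exact Real.exp_zero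
    rw [mul_div_assoc', div_lt_iff₀ h2μ]
    calc Real.exp (-(2*μ*μ)) * (Real.exp (2*μ) - Real.exp (-(2*μ)))
        = (Real.exp (2*μ) - Real.exp (-(2*μ))) * Real.exp (-(2*μ*μ)) := by ring
      _ < (2 * Real.sqrt (1 - μ^2) * Real.exp (2*μ^2) * (2*μ)) * Real.exp (-(2*μ*μ)) := by
          exact mul_lt_mul_of_pos_right main (Real.exp_pos _)
      _ = 2 * Real.sqrt (1 - μ^2) * (2*μ) * (Real.exp (-(2*μ*μ)) * Real.exp (2*μ^2)) := by ring
      _ = 2 * Real.sqrt (1 - μ^2) * (2*μ) := by rw [hinv, mul_one]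
  · refine ⟨1/(1-μ), by simp; linarith, ?_⟩
    have h1m : (0:ℝ) < 1 - μ := by linarith
    set l := 1/(1-μ) with hl
    have hlpos : 0 < l := by rw [hl]; positivity
    have step1 : Real.exp (-(l*μ)) * ((Real.exp l - Real.exp (-l)) / l)
        < Real.exp (-(l*μ)) * (Real.exp l / l) := by
      apply mul_lt_mul_of_pos_left _ (Real.exp_pos _)
      apply (div_lt_div_iff_of_pos_right hlpos).mpr
      linarith [Real.exp_pos (-l)]
    have step2 : Real.exp (-(l*μ)) * (Real.exp l / l) = Real.exp 1 * (1 - μ) := by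
      have hme : Real.exp (-(l*μ)) * Real.exp l = Real.exp 1 := by
        rw [← Real.exp_add]
        congr 1
        rw [hl]; field_simp; ring
      calc Real.exp (-(l*μ)) * (Real.exp l / l)
          = (Real.exp (-(l*μ)) * Real.exp l) / l := by ring
        _ = Real.exp 1 / l := by rw [hme]
        _ = Real.exp 1 * (1 - μ) := by rw [hl]; field_simp
    have step3 : Real.exp 1 * (1 - μ) ≤ 2 * Real.sqrt (1 - μ^2) := by
      have he : Real.exp 1 < 2.7182818286 := Real.exp_one_lt_d9
      have hepos : 0 < Real.exp 1 := Real.exp_pos 1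
      have he2 : Real.exp 1 ^ 2 < 7.39 := by nlinarith
      have hle : Real.exp 1 * (1-μ) / 2 ≤ Real.sqrt (1 - μ^2) := by
        rw [Real.le_sqrt (by positivity) (by nlinarith)]
        nlinarith [mul_pos h1m h1m]
      linarith
    exact lt_of_lt_of_le (step2 ▸ step1) step3


section Main

variable {n : ℕ}

lemma box_integral (n : ℕ) (l : ℝ) (hl : l ≠ 0) :
    ∫ x in (Icc (fun _ => -1 : Fin n → ℝ) (fun _ => 1)), Real.exp (l * ∑ i, x i)
      = ((Real.exp l - Real.exp (-l)) / l) ^ n := by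
  rw [← integral_indicator measurableSet_Icc]
  have hid : ((Icc (fun _ => -1 : Fin n → ℝ) (fun _ => 1)).indicator
      fun x => Real.exp (l * ∑ i, x i))
      = fun x => ∏ i, (Icc (-1:ℝ) 1).indicator (fun t => Real.exp (l * t)) (x i) := by
    funext x
    by_cases hx : x ∈ Icc (fun _ => -1 : Fin n → ℝ) (fun _ => 1)
    · rw [Set.indicator_of_mem hx]
      rw [← Set.pi_univ_Icc, Set.mem_univ_pi] at hx
      rw [Finset.mul_sum, Real.exp_sum]
      exact Finset.prod_congr rfl fun i _ => (Set.indicator_of_mem (hx i) (fun t => Real.exp (l * t))).symm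
    · rw [Set.indicator_of_notMem hx]
      rw [← Set.pi_univ_Icc, Set.mem_univ_pi] at hx
      push_neg at hx
      obtain ⟨i, hi⟩ := hx
      exact (Finset.prod_eq_zero (Finset.mem_univ i) (Set.indicator_of_notMem hi _)).symm
  rw [hid]
  beta_reduce
  rw [volume_pi, integral_fintype_prod_eq_pow (ι := Fin n)
    (f := (Icc (-1:ℝ) 1).indicator (fun t => Real.exp (l * t))), Fintype.card_fin]
  congr 1
  rw [integral_indicator measurableSet_Icc, MeasureTheory.integral_Icc_eq_integral_Ioc,
    ← intervalIntegral.integral_of_le (by norm_num : (-1:ℝ) ≤ 1)]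
  rw [intervalIntegral.integral_comp_mul_left (fun t => Real.exp t) hl]
  simp [integral_exp, mul_comm, smul_eq_mul]
  ring

end Main


/-- For every positive integer `n`, every nonzero `m ∈ (-1,1)` and every measurable
`K ⊆ [-1,1]^n` of positive volume whose barycenter is `m·(1,…,1)`, one has
`vol(K)^(1/n) < 2√(1 - m²)`. -/
theorem isobarycentric_diagonal (n : ℕ) (hn : 0 < n) (m : ℝ)
    (hm : m ∈ Ioo (-1 : ℝ) 1) (hm0 : m ≠ 0)
    (K : Set (Fin n → ℝ)) (hK : MeasurableSet K)
    (hKsub : K ⊆ Icc (fun _ => -1 : Fin n → ℝ) (fun _ => 1))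
    (hKpos : 0 < volume K)
    (hbar : (volume K).toReal⁻¹ • (∫ x in K, x) = (fun _ => m : Fin n → ℝ)) :
    (volume K).toReal ^ ((1 : ℝ) / n) < 2 * Real.sqrt (1 - m ^ 2) := by
  obtain ⟨hm1, hm2⟩ := hm
  set box : Set (Fin n → ℝ) := Icc (fun _ => -1) (fun _ => 1) with hboxdef
  have hboxmeas : MeasurableSet box := measurableSet_Icc
  have hboxfin : volume box < ⊤ := isCompact_Icc.measure_lt_top
  have hKfin : volume K < ⊤ := lt_of_le_of_lt (measure_mono hKsub) hboxfin
  set V := (volume K).toReal with hVdef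
  have hVpos : 0 < V := ENNReal.toReal_pos hKpos.ne' hKfin.ne
  -- choose the tilt parameter
  have habs : |m| < 1 := abs_lt.mpr ⟨hm1, hm2⟩
  obtain ⟨l0, hl0pos, hl0⟩ := scalar_core (abs_pos.mpr hm0) habs
  set l : ℝ := if 0 < m then l0 else -l0 with hldef
  have hlne : l ≠ 0 := by
    rcases lt_or_gt_of_ne hm0 with h | h
    · simp [hldef, not_lt.mpr h.le, hl0pos.ne']
    · simp [hldef, h, hl0pos.ne']
  set B : ℝ := Real.exp (-(l*m)) * ((Real.exp l - Real.exp (-l)) / l) with hBdef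
  have hBeq : B = Real.exp (-(l0*|m|)) * ((Real.exp l0 - Real.exp (-l0)) / l0) := by
    rcases lt_or_gt_of_ne hm0 with h | h
    · have hll : l = -l0 := by simp [hldef, not_lt.mpr h.le]
      rw [hBdef, hll, abs_of_neg h]
      rw [show -(-l0*m) = -(l0 * -m) by ring, neg_neg]
      congr 1
      rw [div_eq_div_iff (neg_ne_zero.mpr hl0pos.ne') hl0pos.ne']
      ring
    · have hll : l = l0 := by simp [hldef, h]
      rw [hBdef, hll, abs_of_pos h]
  have hBlt : B < 2 * Real.sqrt (1 - m^2) := by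
    rw [hBeq, show (1:ℝ) - m^2 = 1 - |m|^2 by rw [sq_abs]]
    exact hl0
  have hBpos : 0 < B := by
    rw [hBeq]
    have h1 : Real.exp (-l0) < Real.exp l0 := Real.exp_lt_exp.mpr (by linarith)
    exact mul_pos (Real.exp_pos _) (div_pos (by linarith) hl0pos)
  -- integrability of coordinates
  have hbdd : ∀ x ∈ K, ‖x‖ ≤ 1 := by
    intro x hx
    obtain ⟨hx1, hx2⟩ := hKsub hx
    rw [pi_norm_le_iff_of_nonneg zero_le_one]
    intro i
    rw [Real.norm_eq_abs, abs_le]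
    exact ⟨hx1 i, hx2 i⟩
  have hIdInt : IntegrableOn (fun x : Fin n → ℝ => x) K volume := by
    apply Measure.integrableOn_of_bounded hKfin.ne aestronglyMeasurable_id
    exact (ae_restrict_iff' hK).mpr (ae_of_all _ hbdd)
  have hint_i : ∀ i, IntegrableOn (fun x : Fin n → ℝ => x i) K volume := fun i =>
    (ContinuousLinearMap.proj (R := ℝ) (φ := fun _ : Fin n => ℝ) i).integrable_comp hIdInt
  -- coordinates of the barycenter
  have hIeq : (∫ x in K, x) = V • (fun _ => m : Fin n → ℝ) := by
    rw [← hbar, smul_smul, mul_inv_cancel₀ hVpos.ne', one_smul]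
  have hcoord : ∀ i, ∫ x in K, x i = V * m := by
    intro i
    have := (ContinuousLinearMap.proj (R := ℝ) (φ := fun _ : Fin n => ℝ) i).integral_comp_comm hIdInt
    simp only [ContinuousLinearMap.proj_apply] at this
    rw [this, hIeq]
    simp
  have hsumInt : IntegrableOn (fun x : Fin n → ℝ => ∑ i, x i) K volume :=
    integrable_finset_sum _ (fun i _ => hint_i i)
  have hsumeq : ∫ x in K, (∑ i, x i) = n * (V * m) := by
    rw [integral_finset_sum _ (fun i _ => hint_i i)]
    simp [hcoord, Finset.sum_const]
  -- step 1 : V ≤ ∫_K exp(l∑xᵢ - l n m)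
  have hexpContOn : IntegrableOn (fun x : Fin n → ℝ => Real.exp (l * ∑ i, x i - l * (n * m)))
      box volume := by
    apply ContinuousOn.integrableOn_compact isCompact_Icc
    fun_prop
  have hexpIntK : IntegrableOn (fun x : Fin n → ℝ => Real.exp (l * ∑ i, x i - l * (n * m)))
      K volume := hexpContOn.mono_set hKsub
  have hc1 : IntegrableOn (fun _ : Fin n → ℝ => (1:ℝ)) K volume :=
    integrableOn_const hKfin.ne
  have hc2 : IntegrableOn (fun _ : Fin n → ℝ => l * ((n:ℝ) * m)) K volume :=
    integrableOn_const hKfin.ne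
  have hmul : IntegrableOn (fun x : Fin n → ℝ => l * ∑ i, x i) K volume := hsumInt.const_mul l
  have hlin : IntegrableOn (fun x : Fin n → ℝ => l * ∑ i, x i - l * ((n:ℝ) * m)) K volume :=
    hmul.sub hc2
  have hlin1 : IntegrableOn (fun x : Fin n → ℝ => 1 + (l * ∑ i, x i - l * ((n:ℝ) * m))) K volume :=
    hc1.add hlin
  have step1 : V ≤ ∫ x in K, Real.exp (l * ∑ i, x i - l * (n * m)) := by
    have heq : ∫ x in K, (1 + (l * ∑ i, x i - l * ((n:ℝ) * m))) = V := by
      rw [integral_add hc1 hlin, integral_sub hmul hc2,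
        integral_const_mul, hsumeq, setIntegral_const, setIntegral_const]
      simp only [measureReal_def, smul_eq_mul, mul_one, ← hVdef]
      ring
    rw [← heq]
    apply setIntegral_mono_on hlin1 hexpIntK hK
    intro x _
    linarith [Real.add_one_le_exp (l * ∑ i, x i - l * ((n:ℝ) * m))]
  -- step 2 : extend to the box
  have step2 : ∫ x in K, Real.exp (l * ∑ i, x i - l * (n * m))
      ≤ ∫ x in box, Real.exp (l * ∑ i, x i - l * (n * m)) := by
    apply setIntegral_mono_set hexpContOn
    · exact ae_of_all _ (fun x => (Real.exp_pos _).le)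
    · exact HasSubset.Subset.eventuallyLE hKsub
  -- step 3 : compute the box integral
  have step3 : ∫ x in box, Real.exp (l * ∑ i, x i - l * (n * m)) = B ^ n := by
    have : (fun x : Fin n → ℝ => Real.exp (l * ∑ i, x i - l * (n * m)))
        = fun x => Real.exp (l * ∑ i, x i) * Real.exp (-(l * (n * m))) := by
      funext x
      rw [← Real.exp_add]
      ring_nf
    rw [this, integral_mul_const, box_integral n l hlne]
    rw [hBdef, mul_pow, show -(l * (↑n * m)) = (n : ℕ) * (-(l * m)) by push_cast; ring,
      Real.exp_nat_mul]
    ring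
  -- conclude
  have hVle : V ≤ B ^ n := le_trans step1 (le_trans step2 (le_of_eq step3))
  have hnn : (n : ℝ) ≠ 0 := Nat.cast_ne_zero.mpr hn.ne'
  calc V ^ ((1:ℝ)/n) ≤ (B ^ n) ^ ((1:ℝ)/n) := by
        apply Real.rpow_le_rpow hVpos.le hVle (by positivity)
    _ = B := by
        rw [← Real.rpow_natCast B n, ← Real.rpow_mul hBpos.le]
        rw [mul_one_div, div_self hnn, Real.rpow_one]
    _ < 2 * Real.sqrt (1 - m^2) := hBlt
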